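/- For every stochastic deterministic finite automaton A = (S, Σ, δ, p, s₀), the family (L_A(t))_{t ∈ Σ*} indexed by all traces is summable and its sum satisfies ∑_{t ∈ Σ*} L_A(t) ≤ 1. -/
import Mathlib


open scoped Classical BigOperators

/-- Vertices of a stochastic directed action graph: the input node `inp`,
the output node `out`, and the action-labeled nodes `node n` for `n : N`. -/
inductive Vtx (N : Type) where
  | inp : Vtx N
  | out : Vtx N
  | node : N → Vtx N
  deriving DecidableEq, Fintype

/-- Stochastic deterministic finite automaton over states `S` and actions `Act`. -/
structure SDFA (S Act : Type) [Fintype S] [Fintype Act] where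
  δ : S → Act → S
  p : S → Act → ℝ
  s0 : S
  p_nonneg : ∀ s a, 0 ≤ p s a
  p_le_one : ∀ s a, p s a ≤ 1
  sum_le_one : ∀ s, ∑ a, p s a ≤ 1

variable {S Act : Type} [Fintype S] [Fintype Act]

/-- `π(s, t)` defined recursively from a transition function `δ` and
transition probability function `p`:
`π(s, ε) = 1 − ∑_{λ} p(s,λ)` and `π(s, λ·t') = p(s,λ) · π(δ(s,λ), t')`. -/
def piFun {σ : Type} (δ : σ → Act → σ) (p : σ → Act → ℝ) : σ → List Act → ℝ
  | s, [] => 1 - ∑ a, p s a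
  | s, a :: t => p s a * piFun δ p (δ s a) t

/-- The function `π_A` of an SDFA `A`. -/
def SDFA.pi (M : SDFA S Act) : S → List Act → ℝ := piFun M.δ M.p

/-- The stochastic language of an SDFA: `L_A(t) = π_A(s₀, t)`. -/
def SDFA.lang (M : SDFA S Act) (t : List Act) : ℝ := M.pi M.s0 t

/-- The state reached from `s` by running the word `w`. -/
def SDFA.run (M : SDFA S Act) : S → List Act → S
  | s, [] => s
  | s, a :: w => M.run (M.δ s a) w

/-- `posWord M s w` holds if every transition along `w` from `s` has positive probability. -/
def SDFA.posWord (M : SDFA S Act) : S → List Act → Prop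
  | _, [] => True
  | s, a :: w => 0 < M.p s a ∧ M.posWord (M.δ s a) w

/-- `y` is reachable from `x` via transitions of positive probability. -/
def SDFA.Reach (M : SDFA S Act) (x y : S) : Prop :=
  ∃ w : List Act, M.posWord x w ∧ M.run x w = y

/-- Stochastic directed action graph over nodes `N` and actions `Act`.
The flow relation `γ` never enters the input node and never leaves the output
node; the flow probability function `q` is extended by `0` outside of `γ`,
and the flow probabilities on the outgoing arcs of every node (including the
input node) sum to `1`. -/
structure SDAG (N Act : Type) [Fintype N] [Fintype Act] where
  β : N → Act
  γ : Vtx N → Vtx N → Prop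
  q : Vtx N → Vtx N → ℝ
  q_nonneg : ∀ x y, 0 ≤ q x y
  q_le_one : ∀ x y, q x y ≤ 1
  q_eq_zero : ∀ x y, ¬ γ x y → q x y = 0
  no_into_inp : ∀ x, ¬ γ x Vtx.inp
  no_from_out : ∀ y, ¬ γ Vtx.out y
  sum_q : ∀ x : Vtx N, x ≠ Vtx.out → ∑ y, q x y = 1

/-- An execution: a finite sequence of vertices beginning with the input node,
ending with the output node, whose consecutive pairs all lie in the flow relation `γ`. -/
def IsExec {N : Type} (γ : Vtx N → Vtx N → Prop) (l : List (Vtx N)) : Prop :=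
  l.Chain' γ ∧ l.head? = some Vtx.inp ∧ l.getLast? = some Vtx.out

/-- The probability of an execution: the product of `q` over its consecutive pairs. -/
def execProb {N : Type} (q : Vtx N → Vtx N → ℝ) (l : List (Vtx N)) : ℝ :=
  ((l.zip l.tail).map fun pr => q pr.1 pr.2).prod

/-- The trace confirmed by an execution: the labels of its entries other than
the input and output nodes, in order. -/
def execTrace {N : Type} (β : N → Act) (l : List (Vtx N)) : List Act :=
  l.filterMap (fun v => match v with | Vtx.node n => some (β n) | _ => none)

/-- The stochastic language of an action graph given by flow relation `γ`,
flow probabilities `q` and labeling `β`: `L(t)` is the sum of the probabilities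
of all executions confirming `t` (`0` if there are none). -/
noncomputable def gLang {N : Type} (γ : Vtx N → Vtx N → Prop)
    (q : Vtx N → Vtx N → ℝ) (β : N → Act) (t : List Act) : ℝ :=
  ∑' l : {l : List (Vtx N) // IsExec γ l ∧ execTrace β l = t}, execProb q (l : List (Vtx N))

/-- The stochastic language of an SDAG. -/
noncomputable def SDAG.lang {N : Type} [Fintype N] (G : SDAG N Act) : List Act → ℝ :=
  gLang G.γ G.q G.β

/-- A (γ, β) action-graph structure is deterministic: distinct successors of any
node in `N ∪ {i}` carry different labels. -/
def IsDetData {N : Type} (γ : Vtx N → Vtx N → Prop) (β : N → Act) : Prop :=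
  ∀ x : Vtx N, x ≠ Vtx.out → ∀ n₁ n₂ : N,
    γ x (Vtx.node n₁) → γ x (Vtx.node n₂) → n₁ ≠ n₂ → β n₁ ≠ β n₂

/-- A deterministic SDAG. -/
def SDAG.IsDet {N : Type} [Fintype N] (G : SDAG N Act) : Prop := IsDetData G.γ G.β

/-- The transitions of an SDFA: pairs (state, action) of positive probability;
the transition `(x, λ)` represents the triple `(x, λ, δ(x,λ))`. -/
abbrev SDFA.TransOf (M : SDFA S Act) : Type := {xa : S × Act // 0 < M.p xa.1 xa.2}

/-- The target state of a transition. -/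
def SDFA.tgt (M : SDFA S Act) (n : M.TransOf) : S := M.δ n.1.1 n.1.2

/-- The labeling function of `SDAG(A)`: a transition `(x, λ, y)` is labeled `λ`. -/
def dagBeta (M : SDFA S Act) (n : M.TransOf) : Act := n.1.2

/-- The flow relation of `SDAG(A)`. -/
def dagGamma (M : SDFA S Act) : Vtx M.TransOf → Vtx M.TransOf → Prop
  | Vtx.inp, Vtx.node n => n.1.1 = M.s0
  | Vtx.inp, Vtx.out => ∑ μ, M.p M.s0 μ < 1
  | Vtx.node m, Vtx.node n => n.1.1 = M.tgt m
  | Vtx.node m, Vtx.out => ∑ μ, M.p (M.tgt m) μ < 1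
  | _, _ => False

/-- The flow probability function of `SDAG(A)` (extended by `0` outside the arcs). -/
noncomputable def dagQ (M : SDFA S Act) : Vtx M.TransOf → Vtx M.TransOf → ℝ
  | Vtx.inp, Vtx.node n => if n.1.1 = M.s0 then M.p n.1.1 n.1.2 else 0
  | Vtx.inp, Vtx.out =>
      if ∑ μ, M.p M.s0 μ < 1 then 1 - ∑ μ, M.p M.s0 μ else 0
  | Vtx.node m, Vtx.node n => if n.1.1 = M.tgt m then M.p n.1.1 n.1.2 else 0
  | Vtx.node m, Vtx.out =>
      if ∑ μ, M.p (M.tgt m) μ < 1 then 1 - ∑ μ, M.p (M.tgt m) μ else 0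
  | _, _ => 0

/-- The transition probability function of `SFA(G)`:
`p(x,λ) = ∑_{y ∈ N : (x,y) ∈ γ, β(y) = λ} q(x,y)`. -/
noncomputable def sfaP {N : Type} [Fintype N] (G : SDAG N Act) (x : Vtx N) (a : Act) : ℝ :=
  ∑ y : N, if G.γ x (Vtx.node y) ∧ G.β y = a then G.q x (Vtx.node y) else 0

lemma piFun_nonneg {S Act : Type} [Fintype S] [Fintype Act]
    (M : SDFA S Act) : ∀ (t : List Act) (s : S), 0 ≤ piFun M.δ M.p s t := by
  intro t
  induction t with
  | nil => intro s; simp [piFun]; exact M.sum_le_one s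
  | cons a t ih =>
    intro s
    exact mul_nonneg (M.p_nonneg s a) (ih (M.δ s a))

/-- Finset of all words of length ≤ n. -/
def wordsLe (Act : Type) [Fintype Act] [DecidableEq Act] : ℕ → Finset (List Act)
  | 0 => {[]}
  | n + 1 =>
      insert [] (((Finset.univ : Finset Act) ×ˢ wordsLe Act n).image fun p => p.1 :: p.2)

lemma mem_wordsLe {Act : Type} [Fintype Act] [DecidableEq Act] :
    ∀ (n : ℕ) (t : List Act), t.length ≤ n → t ∈ wordsLe Act n := by
  intro n
  induction n with
  | zero => intro t ht; simp at ht; simp [wordsLe, ht]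
  | succ n ih =>
    intro t ht
    cases t with
    | nil => simp [wordsLe]
    | cons a t =>
      simp only [wordsLe, Finset.mem_insert, Finset.mem_image]
      right
      exact ⟨(a, t), by simp [ih t (by simpa using ht)], rfl⟩

lemma sum_wordsLe_le_one {S Act : Type} [Fintype S] [Fintype Act] [DecidableEq Act]
    (M : SDFA S Act) : ∀ (n : ℕ) (s : S), ∑ t ∈ wordsLe Act n, piFun M.δ M.p s t ≤ 1 := by
  intro n
  induction n with
  | zero =>
    intro s
    simp [wordsLe, piFun]
    exact Finset.sum_nonneg fun a _ => M.p_nonneg s a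
  | succ n ih =>
    intro s
    rw [wordsLe]
    rw [Finset.sum_insert]
    · rw [Finset.sum_image]
      · rw [Finset.sum_product]
        have h1 : ∀ a : Act, ∑ t ∈ wordsLe Act n, piFun M.δ M.p s (a :: t)
            = M.p s a * ∑ t ∈ wordsLe Act n, piFun M.δ M.p (M.δ s a) t := by
          intro a
          rw [Finset.mul_sum]
          exact Finset.sum_congr rfl fun t _ => rfl
        calc piFun M.δ M.p s []
              + ∑ a : Act, ∑ t ∈ wordsLe Act n, piFun M.δ M.p s (a :: t)
            = (1 - ∑ a, M.p s a)
              + ∑ a : Act, M.p s a * ∑ t ∈ wordsLe Act n, piFun M.δ M.p (M.δ s a) t := by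
              simp only [piFun, h1, Finset.mul_sum]
          _ ≤ (1 - ∑ a, M.p s a) + ∑ a : Act, M.p s a * 1 := by
              gcongr with a
              · exact M.p_nonneg s a
              · exact ih (M.δ s a)
          _ ≤ 1 := by simp
      · intro x _ y _ h
        rw [List.cons.injEq] at h
        exact Prod.ext h.1 h.2
    · simp

theorem sdfa_lang_summable_and_tsum_le_one {S Act : Type} [Fintype S] [Fintype Act]
    (M : SDFA S Act) :
    Summable M.lang ∧ ∑' t : List Act, M.lang t ≤ 1 := by
  classical
  have hnn : ∀ t, 0 ≤ M.lang t := fun t => piFun_nonneg M t M.s0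
  have hbound : ∀ u : Finset (List Act), ∑ t ∈ u, M.lang t ≤ 1 := by
    intro u
    calc ∑ t ∈ u, M.lang t
        ≤ ∑ t ∈ wordsLe Act (u.sup List.length), piFun M.δ M.p M.s0 t := by
          apply Finset.sum_le_sum_of_subset_of_nonneg
          · intro t ht
            exact mem_wordsLe _ t (Finset.le_sup ht)
          · intro t _ _
            exact piFun_nonneg M t M.s0
      _ ≤ 1 := sum_wordsLe_le_one M _ M.s0
  have hs : Summable M.lang := summable_of_sum_le hnn hbound
  exact ⟨hs, Summable.tsum_le_of_sum_le hs hbound⟩
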